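/- For any two finite simple directed graphs G and F without self-loops on nonempty finite vertex sets, the broadcast rate is multiplicative under the lexicographic product: β(G ∘ F) = β(G) · β(F). -/

import Mathlib

namespace IC

/-- A `(t, r)` index code (with per-message lengths `t j` bits and index length
`r` bits) exists for the directed graph with edge relation `E` on vertex set `V`:
there are an encoder `φ` and, for each node `j`, a decoder `ψ j` that recovers
message `x j` from the index `φ x` and the side information `(x i)_{i ∈ A_j}`. -/
def HasCode {V : Type*} (E : V → V → Prop) (t : V → ℕ) (r : ℕ) : Prop :=
  ∃ (φ : (∀ j : V, Fin (t j) → Fin 2) → (Fin r → Fin 2))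
    (ψ : ∀ j : V, (Fin r → Fin 2) → (∀ i : {i : V // E i j}, Fin (t i.1) → Fin 2) →
      (Fin (t j) → Fin 2)),
    ∀ (x : ∀ j : V, Fin (t j) → Fin 2) (j : V),
      ψ j (φ x) (fun i => x i.1) = x j

/-- The broadcast rate `β = inf { r/t : a (t, r) index code exists }`. -/
noncomputable def broadcastRate {V : Type*} (E : V → V → Prop) : ℝ :=
  sInf {ρ : ℝ | ∃ (t r : ℕ), 1 ≤ t ∧ HasCode E (fun _ => t) r ∧ ρ = (r : ℝ) / t}

end IC
namespace IC

/-- The lexicographic product `G ∘ F` of two directed graphs. -/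
def lexProd {V W : Type*} (GE : V → V → Prop) (FE : W → W → Prop) :
    V × W → V × W → Prop :=
  fun x y => GE x.1 y.1 ∨ (x.1 = y.1 ∧ FE x.2 y.2)

end IC

namespace ICAux
open Classical
attribute [local instance] Classical.propDecidable

abbrev Str (t : ℕ) := Fin t → Fin 2

variable {V : Type*} {W : Type*}

/-- Confusability of two message tuples. -/
def Conf (E : V → V → Prop) {t : ℕ} (x x' : V → Str t) : Prop :=
  ∃ j, (∀ i, E i j → x i = x' i) ∧ x j ≠ x' j

/-- A proper coloring of the confusion graph. -/
def Proper (E : V → V → Prop) {t : ℕ} {γ : Type*} (c : (V → Str t) → γ) : Prop :=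
  ∀ x x', Conf E x x' → c x ≠ c x'

lemma proper_of_hasCode (E : V → V → Prop) {t r : ℕ}
    (h : IC.HasCode E (fun _ => t) r) :
    ∃ φ : (V → Str t) → Str r, Proper E φ := by
  obtain ⟨φ, ψ, hd⟩ := h
  refine ⟨φ, fun x x' hc hEq => ?_⟩
  obtain ⟨j, hag, hne⟩ := hc
  apply hne
  have h1 := hd x j
  have h2 := hd x' j
  have hside : (fun i : {i : V // E i j} => x i.1) = (fun i : {i : V // E i j} => x' i.1) := by
    funext i; exact hag i.1 i.2
  rw [← h1, ← h2, hEq, hside]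

lemma hasCode_of_proper {γ : Type*} [Fintype γ] (E : V → V → Prop) {t r : ℕ}
    {c : (V → Str t) → γ} (hc : Proper E c) (hcard : Fintype.card γ ≤ 2 ^ r) :
    IC.HasCode E (fun _ => t) r := by
  have hcard2 : Fintype.card γ ≤ Fintype.card (Str r) := by
    simpa using hcard
  obtain ⟨ι⟩ := Function.Embedding.nonempty_of_card_le hcard2
  classical
  refine ⟨fun x => ι (c x), fun j y b =>
    if h : ∃ x : V → Str t, ι (c x) = y ∧ ∀ i : {i : V // E i j}, x i.1 = b i
    then h.choose j else fun _ => 0, ?_⟩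
  intro x j
  have hx : ∃ x' : V → Str t, ι (c x') = ι (c x) ∧
      ∀ i : {i : V // E i j}, x' i.1 = x i.1 := ⟨x, rfl, fun _ => rfl⟩
  simp only [dif_pos hx]
  obtain ⟨h1, h2⟩ := hx.choose_spec
  by_contra hne
  have hconf : Conf E hx.choose x := by
    refine ⟨j, fun i hi => h2 ⟨i, hi⟩, hne⟩
  exact hc _ _ hconf (ι.injective h1)


lemma card_str (t : ℕ) : Fintype.card (Str t) = 2 ^ t := by simp

lemma card_msgs [Fintype V] (t : ℕ) :
    Fintype.card (V → Str t) = 2 ^ (t * Fintype.card V) := by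
  rw [Fintype.card_fun, card_str, ← pow_mul]

/-- zero-extension of strings -/
def ext {t₁ t₂ : ℕ} (h : t₁ ≤ t₂) (u : Str t₁) : Str t₂ :=
  fun j => if hj : (j : ℕ) < t₁ then u ⟨j, hj⟩ else 0

lemma ext_inj {t₁ t₂ : ℕ} (h : t₁ ≤ t₂) : Function.Injective (ext h) := by
  intro u u' he
  funext j
  have := congrFun he ⟨j, lt_of_lt_of_le j.2 h⟩
  simpa [ext, j.2] using this

/-- flatten a `k`-tuple of `r`-strings into a `k*r`-string -/
def flatten {k r : ℕ} (f : Fin k → Str r) : Str (k * r) :=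
  fun p => f (finProdFinEquiv.symm p).1 (finProdFinEquiv.symm p).2

lemma flatten_inj {k r : ℕ} : Function.Injective (flatten (k := k) (r := r)) := by
  intro f f' he
  funext i j
  have := congrFun he (finProdFinEquiv (i, j))
  simpa [flatten] using this



section Basics
variable (E : V → V → Prop)

lemma conf_map {t₁ t₂ : ℕ} (η : Str t₁ → Str t₂) (hη : Function.Injective η)
    {x x' : V → Str t₁} (h : Conf E x x') :
    Conf E (fun v => η (x v)) (fun v => η (x' v)) := by
  obtain ⟨j, hag, hne⟩ := h
  exact ⟨j, fun i hi => congrArg η (hag i hi), fun he => hne (hη he)⟩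

lemma proper_precomp {t₁ t₂ : ℕ} {γ : Type*} {c : (V → Str t₂) → γ} (hc : Proper E c)
    (η : Str t₁ → Str t₂) (hη : Function.Injective η) :
    Proper E (fun x : V → Str t₁ => c (fun v => η (x v))) :=
  fun x x' h => hc _ _ (conf_map E η hη h)

def slice {k t : ℕ} (i : Fin k) (x : V → Str (k * t)) : V → Str t :=
  fun v j => x v (finProdFinEquiv (i, j))

lemma proper_power {t : ℕ} {γ : Type*} {c : (V → Str t) → γ} (hc : Proper E c) (k : ℕ) :
    Proper E (fun x : V → Str (k * t) => fun i : Fin k => c (slice i x)) := by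
  intro x x' h hEq
  obtain ⟨j, hag, hne⟩ := h
  have hex : ∃ p, x j p ≠ x' j p := by
    by_contra hall
    push_neg at hall
    exact hne (funext hall)
  obtain ⟨p, hp⟩ := hex
  set q := finProdFinEquiv.symm p with hq
  have hconf : Conf E (slice q.1 x) (slice q.1 x') := by
    refine ⟨j, fun i hi => ?_, fun he => hp ?_⟩
    · funext jj; simp only [slice, hag i hi]
    · have h2 := congrFun he q.2
      simpa only [slice, hq, Prod.mk.eta, Equiv.apply_symm_apply] using h2
  exact hc _ _ hconf (congrFun hEq q.1)

def rset : Set ℝ :=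
  {ρ : ℝ | ∃ (t r : ℕ), 1 ≤ t ∧ IC.HasCode E (fun _ => t) r ∧ ρ = (r : ℝ) / t}

lemma broadcastRate_eq : IC.broadcastRate E = sInf (rset E) := rfl

lemma hasCode_trivial [Fintype V] (t : ℕ) :
    IC.HasCode E (fun _ => t) (t * Fintype.card V) := by
  have hid : Proper E (id : (V → Str t) → (V → Str t)) := by
    rintro x x' ⟨j, -, hne⟩ hEq
    exact hne (congrFun hEq j)
  exact hasCode_of_proper E hid (by rw [card_msgs])

lemma card_mem_rset [Fintype V] : (Fintype.card V : ℝ) ∈ rset E :=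
  ⟨1, 1 * Fintype.card V, le_refl 1, hasCode_trivial E 1, by simp⟩

lemma rset_nonempty [Fintype V] : (rset E).Nonempty := ⟨_, card_mem_rset E⟩

lemma rset_nonneg {ρ : ℝ} (hρ : ρ ∈ rset E) : 0 ≤ ρ := by
  obtain ⟨t, r, ht, -, rfl⟩ := hρ
  positivity

lemma rset_bddBelow : BddBelow (rset E) := ⟨0, fun ρ h => rset_nonneg E h⟩

lemma beta_le_of_mem {ρ : ℝ} (hρ : ρ ∈ rset E) : IC.broadcastRate E ≤ ρ :=
  csInf_le (rset_bddBelow E) hρ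

lemma le_beta [Fintype V] {c : ℝ} (h : ∀ ρ ∈ rset E, c ≤ ρ) : c ≤ IC.broadcastRate E :=
  le_csInf (rset_nonempty E) h

lemma beta_nonneg [Fintype V] : 0 ≤ IC.broadcastRate E :=
  le_beta E (fun ρ h => rset_nonneg E h)

lemma beta_le_card [Fintype V] : IC.broadcastRate E ≤ (Fintype.card V : ℝ) :=
  beta_le_of_mem E (card_mem_rset E)

lemma one_le_rset [Nonempty V] (hE : ∀ v, ¬ E v v) {ρ : ℝ} (hρ : ρ ∈ rset E) : 1 ≤ ρ := by
  obtain ⟨t, r, ht, ⟨φ, ψ, hd⟩, rfl⟩ := hρ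
  set j0 := Classical.arbitrary V with hj0
  set X : Str t → (V → Str t) := fun u v => if v = j0 then u else fun _ => 0 with hX
  have hinj : Function.Injective (fun u => φ (X u)) := by
    intro u u' he
    have hside : (fun i : {i : V // E i j0} => X u i.1) =
        (fun i : {i : V // E i j0} => X u' i.1) := by
      funext i
      have hne : i.1 ≠ j0 := by
        intro hh
        have hEi : E i.1 j0 := i.2
        rw [hh] at hEi
        exact hE j0 hEi
      simp [hX, hne]
    have h1 := hd (X u) j0
    have h2 := hd (X u') j0
    have hXu : X u j0 = u := by simp [hX]
    have hXu' : X u' j0 = u' := by simp [hX]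
    rw [hXu] at h1; rw [hXu'] at h2
    have he' : φ (X u) = φ (X u') := he
    rw [← h1, ← h2, he', hside]
  have hcard : (2 : ℕ) ^ t ≤ 2 ^ r := by
    have := Fintype.card_le_of_injective _ hinj
    simpa using this
  have htr : t ≤ r := by
    exact (Nat.pow_le_pow_iff_right (by norm_num)).1 hcard
  rw [le_div_iff₀ (by exact_mod_cast ht)]
  simpa using (Nat.cast_le (α := ℝ)).2 htr

lemma one_le_beta [Fintype V] [Nonempty V] (hE : ∀ v, ¬ E v v) :
    1 ≤ IC.broadcastRate E :=
  le_beta E (fun ρ h => one_le_rset E hE h)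

end Basics


section EasyDir
variable {W : Type*} (GE : V → V → Prop) (FE : W → W → Prop)

lemma lex_code [Fintype V] [Fintype W] {tG rG tF rF : ℕ}
    (hGc : IC.HasCode GE (fun _ => tG) rG) (hFc : IC.HasCode FE (fun _ => tF) rF)
    (k : ℕ) (htG : 1 ≤ tG) :
    IC.HasCode (IC.lexProd GE FE) (fun _ => k * tF) ((k * rF / tG + 1) * rG) := by
  obtain ⟨φF, hφF⟩ := proper_of_hasCode FE hFc
  obtain ⟨φG, hφG⟩ := proper_of_hasCode GE hGc
  set j := k * rF / tG + 1 with hj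
  have hle : k * rF ≤ j * tG := by
    have h2 := Nat.mod_lt (k * rF) (show 0 < tG from htG)
    have h3 : k * rF < (k * rF / tG + 1) * tG := by
      calc k * rF = tG * (k * rF / tG) + (k * rF) % tG := (Nat.div_add_mod _ _).symm
        _ < tG * (k * rF / tG) + tG := Nat.add_lt_add_left h2 _
        _ = (k * rF / tG + 1) * tG := by ring
    rw [hj]
    exact le_of_lt h3
  set cF : (W → Str (k * tF)) → Str (k * rF) :=
    fun yb => flatten (fun i => φF (slice i yb)) with hcF
  have hcFproper : Proper FE cF := by
    intro x x' h hEq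
    exact proper_power FE hφF k x x' h (flatten_inj hEq)
  set cG : (V → Str (k * rF)) → (Fin j → Str rG) :=
    fun y => fun i => φG (slice i (fun v => ext hle (y v))) with hcG
  have hcGproper : Proper GE cG :=
    proper_precomp GE (proper_power GE hφG j) (ext hle) (ext_inj hle)
  set C : ((V × W) → Str (k * tF)) → (Fin j → Str rG) :=
    fun X => cG (fun v => cF (fun w => X (v, w))) with hC
  have hCproper : Proper (IC.lexProd GE FE) C := by
    rintro X X' ⟨⟨v, w⟩, hag, hne⟩ hEq
    have hconfF : Conf FE (fun w' => X (v, w')) (fun w' => X' (v, w')) :=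
      ⟨w, fun w'' hw'' => hag (v, w'') (Or.inr ⟨rfl, hw''⟩), hne⟩
    have hconfG : Conf GE (fun v' => cF (fun w' => X (v', w')))
        (fun v' => cF (fun w' => X' (v', w'))) := by
      refine ⟨v, fun i hi => ?_, fun heq => hcFproper _ _ hconfF heq⟩
      have hblk : (fun w' => X (i, w')) = (fun w' => X' (i, w')) :=
        funext fun w' => hag (i, w') (Or.inl hi)
      simp only [hblk]
    exact hcGproper _ _ hconfG hEq
  refine hasCode_of_proper _ hCproper ?_
  rw [Fintype.card_fun, card_str, Fintype.card_fin, ← pow_mul, mul_comm rG j]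

lemma dir_le [Fintype V] [Fintype W] [Nonempty V] [Nonempty W]
    (hG : ∀ v, ¬ GE v v) (hF : ∀ w, ¬ FE w w) :
    IC.broadcastRate (IC.lexProd GE FE) ≤ IC.broadcastRate GE * IC.broadcastRate FE := by
  set βG := IC.broadcastRate GE with hβG
  set βF := IC.broadcastRate FE with hβF
  have hβG1 : 1 ≤ βG := one_le_beta GE hG
  have hβF1 : 1 ≤ βF := one_le_beta FE hF
  refine le_of_forall_pos_le_add (fun ε hε => ?_)
  set n : ℝ := (Fintype.card V : ℝ) with hn
  set m : ℝ := (Fintype.card W : ℝ) with hm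
  have hn1 : 1 ≤ n := by
    have h : (1 : ℕ) ≤ Fintype.card V := Fintype.card_pos
    rw [hn]; exact_mod_cast h
  have hm1 : 1 ≤ m := by
    have h : (1 : ℕ) ≤ Fintype.card W := Fintype.card_pos
    rw [hm]; exact_mod_cast h
  set B : ℝ := n + m + 1 with hB
  have hBpos : 0 < B := by positivity
  set δ : ℝ := min 1 (ε / (2 * B)) with hδ
  have hδpos : 0 < δ := lt_min one_pos (by positivity)
  obtain ⟨g, hgmem, hglt⟩ := exists_lt_of_csInf_lt (rset_nonempty GE)
    (show sInf (rset GE) < βG + δ from lt_add_of_pos_right _ hδpos)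
  obtain ⟨f, hfmem, hflt⟩ := exists_lt_of_csInf_lt (rset_nonempty FE)
    (show sInf (rset FE) < βF + δ from lt_add_of_pos_right _ hδpos)
  obtain ⟨tG, rG, htG, hGc, rfl⟩ := hgmem
  obtain ⟨tF, rF, htF, hFc, rfl⟩ := hfmem
  -- pick k large
  obtain ⟨k0, hk0⟩ := exists_nat_gt ((2 * rG) / (ε * tF))
  set k := k0 + 1 with hk
  have hk1 : (1 : ℕ) ≤ k := Nat.le_add_left 1 k0
  have hkR : ((2 * rG) / (ε * tF)) < k := by
    calc ((2 * rG) / (ε * tF)) < k0 := hk0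
    _ ≤ k := by exact_mod_cast Nat.le_add_right k0 1
  have htFpos : (0 : ℝ) < tF := by exact_mod_cast htF
  have htGpos : (0 : ℝ) < tG := by exact_mod_cast htG
  have hkpos : (0 : ℝ) < k := by exact_mod_cast hk1
  -- membership of the composite code
  have hmem : (((k * rF / tG + 1) * rG : ℕ) : ℝ) / ((k * tF : ℕ) : ℝ) ∈
      rset (IC.lexProd GE FE) :=
    ⟨k * tF, (k * rF / tG + 1) * rG, Nat.mul_pos hk1 htF, lex_code GE FE hGc hFc k htG, rfl⟩
  have hstep1 : IC.broadcastRate (IC.lexProd GE FE) ≤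
      (((k * rF / tG + 1) * rG : ℕ) : ℝ) / ((k * tF : ℕ) : ℝ) :=
    beta_le_of_mem _ hmem
  have hstep2 : (((k * rF / tG + 1) * rG : ℕ) : ℝ) / ((k * tF : ℕ) : ℝ) ≤
      (rG / tG) * (rF / tF) + rG / (k * tF) := by
    have hnum : (((k * rF / tG + 1) * rG : ℕ) : ℝ) ≤ ((k * rF : ℝ) / tG + 1) * rG := by
      push_cast
      have := Nat.cast_div_le (α := ℝ) (m := k * rF) (n := tG)
      push_cast at this
      have hrG0 : (0 : ℝ) ≤ rG := by positivity
      nlinarith [this]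
    have hden : ((k * tF : ℕ) : ℝ) = (k : ℝ) * tF := by push_cast; ring
    rw [hden]
    rw [div_le_iff₀ (by positivity)]
    have heq : ((rG / tG) * (rF / tF) + rG / (k * tF)) * ((k : ℝ) * tF) =
        ((k * rF : ℝ) / tG + 1) * rG := by
      field_simp
    rw [heq]
    exact hnum
  have hstep3 : rG / ((k : ℝ) * tF) ≤ ε / 2 := by
    rw [div_le_iff₀ (by positivity)]
    rw [div_lt_iff₀ (by positivity)] at hkR
    nlinarith
  have hstep4 : (rG / tG) * (rF / tF) ≤ βG * βF + ε / 2 := by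
    have hg0 : (0 : ℝ) ≤ rF / tF := by positivity
    have hβGnn : (0 : ℝ) ≤ βG + δ := by positivity
    have hgf : (rG / tG) * (rF / tF) ≤ (βG + δ) * (βF + δ) :=
      mul_le_mul (le_of_lt hglt) (le_of_lt hflt) hg0 hβGnn
    have hβGn : βG ≤ n := beta_le_card GE
    have hβFm : βF ≤ m := beta_le_card FE
    have hδ1 : δ ≤ 1 := min_le_left _ _
    have hδε : δ ≤ ε / (2 * B) := min_le_right _ _
    have hexp : (βG + δ) * (βF + δ) = βG * βF + δ * (βG + βF + δ) := by ring
    have hbnd : βG + βF + δ ≤ B := by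
      rw [hB]; linarith
    have : δ * (βG + βF + δ) ≤ (ε / (2 * B)) * B := by
      apply mul_le_mul hδε hbnd (by positivity) (by positivity)
    have hBne : B ≠ 0 := ne_of_gt hBpos
    have h6 : δ * (βG + βF + δ) ≤ ε / 2 := by
      calc δ * (βG + βF + δ) ≤ (ε / (2 * B)) * B := this
      _ = ε / 2 := by field_simp
    have h7 : (βG + δ) * (βF + δ) ≤ βG * βF + ε / 2 := by
      rw [hexp]; linarith
    linarith
  have hden2 : ((k * tF : ℕ) : ℝ) = (k : ℝ) * tF := by push_cast; ring
  calc IC.broadcastRate (IC.lexProd GE FE) ≤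
      (((k * rF / tG + 1) * rG : ℕ) : ℝ) / ((k * tF : ℕ) : ℝ) := hstep1
    _ ≤ (rG / tG) * (rF / tF) + rG / ((k : ℝ) * tF) := hstep2
    _ ≤ (βG * βF + ε / 2) + ε / 2 := add_le_add hstep4 hstep3
    _ = βG * βF + ε := by ring

end EasyDir

section NatLemmas

lemma four_pow_sq (s : ℕ) : (s + 1) ^ 2 ≤ 4 ^ s := by
  induction s with
  | zero => norm_num
  | succ s ih =>
    have h4 : 4 ^ (s + 1) = 4 * 4 ^ s := by ring
    have : (s + 2) ^ 2 ≤ 4 * (s + 1) ^ 2 := by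
      have e1 : (s + 2) ^ 2 = s * s + 4 * s + 4 := by ring
      have e2 : 4 * (s + 1) ^ 2 = 4 * (s * s) + 8 * s + 4 := by ring
      omega
    calc (s + 1 + 1) ^ 2 = (s + 2) ^ 2 := by ring
      _ ≤ 4 * (s + 1) ^ 2 := this
      _ ≤ 4 * 4 ^ s := by omega
      _ = 4 ^ (s + 1) := by ring

lemma log_le_two_sqrt (x : ℕ) : Nat.log 2 x ≤ 2 * Nat.sqrt x := by
  rcases Nat.eq_zero_or_pos x with h | h
  · simp [h]
  have hlt : x < 2 ^ (2 * Nat.sqrt x) := by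
    calc x < (Nat.sqrt x + 1) ^ 2 := Nat.lt_succ_sqrt' x
      _ ≤ 4 ^ Nat.sqrt x := four_pow_sq _
      _ = 2 ^ (2 * Nat.sqrt x) := by
          rw [show (4 : ℕ) = 2 ^ 2 from rfl, ← pow_mul]
  exact le_of_lt (Nat.log_lt_of_lt_pow (Nat.pos_iff_ne_zero.1 h) hlt)

lemma choose_le_pow (n k : ℕ) : Nat.choose n k ≤ n ^ k := by
  induction n generalizing k with
  | zero =>
    cases k with
    | zero => simp
    | succ k => simp [Nat.choose_eq_zero_of_lt]
  | succ n ih =>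
    cases k with
    | zero => simp
    | succ k =>
      have h1 : Nat.choose (n + 1) (k + 1) = Nat.choose n k + Nat.choose n (k + 1) :=
        Nat.choose_succ_succ n k
      have h2 : Nat.choose n k ≤ n ^ k := ih k
      have h3 : Nat.choose n (k + 1) ≤ n ^ (k + 1) := ih (k + 1)
      have h4 : (n + 1) ^ (k + 1) = (n + 1) ^ k * n + (n + 1) ^ k := by ring
      have h5 : n ^ k ≤ (n + 1) ^ k := Nat.pow_le_pow_left (Nat.le_succ n) k
      have h6 : n ^ (k + 1) ≤ (n + 1) ^ k * n := by
        rw [pow_succ]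
        exact Nat.mul_le_mul_right n h5
      omega

lemma choose_step {N K : ℕ} (hK : 1 ≤ K) (hKN : K ≤ N) :
    N * Nat.choose (N - 1) (K - 1) = Nat.choose N K * K := by
  obtain ⟨N', rfl⟩ : ∃ N', N = N' + 1 := ⟨N - 1, by omega⟩
  obtain ⟨K', rfl⟩ : ∃ K', K = K' + 1 := ⟨K - 1, by omega⟩
  simpa using Nat.add_one_mul_choose_eq N' K'

lemma choose_ratio {l K N : ℕ} (h1 : l ≤ K) (h2 : K ≤ N) :
    Nat.choose (N - l) (K - l) * N ^ l ≤ Nat.choose N K * K ^ l := by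
  induction l with
  | zero => simp
  | succ l ih =>
    have hlK : l ≤ K := by omega
    have ihl := ih hlK
    have hstep : (N - l) * Nat.choose (N - l - 1) (K - l - 1) =
        Nat.choose (N - l) (K - l) * (K - l) := by
      refine choose_step (by omega) (by omega)
    have hpos : 0 < N - l := by omega
    -- multiply target by (N - l) and compare
    refine Nat.le_of_mul_le_mul_left ?_ hpos
    calc (N - l) * (Nat.choose (N - (l+1)) (K - (l+1)) * N ^ (l+1))
          = ((N - l) * Nat.choose (N - l - 1) (K - l - 1)) * N ^ (l + 1) := by
            rw [show N - (l+1) = N - l - 1 from by omega, show K - (l+1) = K - l - 1 from by omega]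
            ring
        _ = (Nat.choose (N - l) (K - l) * (K - l)) * N ^ (l + 1) := by rw [hstep]
        _ = ((K - l) * N) * (Nat.choose (N - l) (K - l) * N ^ l) := by ring
        _ ≤ ((K - l) * N) * (Nat.choose N K * K ^ l) := Nat.mul_le_mul_left _ ihl
        _ ≤ ((N - l) * K) * (Nat.choose N K * K ^ l) := by
            have : (K - l) * N ≤ (N - l) * K := by
              have hl : l * K ≤ l * N := Nat.mul_le_mul_left l h2
              have e1 : (K - l) * N = K * N - l * N := by
                rw [Nat.sub_mul]
              have e2 : (N - l) * K = N * K - l * K := by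
                rw [Nat.sub_mul]
              rw [e1, e2, Nat.mul_comm K N]
              omega
            exact Nat.mul_le_mul_right _ this
        _ = (N - l) * (Nat.choose N K * K ^ (l+1)) := by ring

lemma contain_count {X : Type*} [Fintype X] [DecidableEq X] {S : Finset X} {s K : ℕ}
    (hS : S.card = s) (hsK : s ≤ K) :
    ((Finset.powersetCard K (Finset.univ : Finset X)).filter (fun M => S ⊆ M)).card =
      Nat.choose (Fintype.card X - s) (K - s) := by
  classical
  have hcard : (Finset.univ \ S).card = Fintype.card X - s := by
    rw [Finset.card_sdiff_of_subset (Finset.subset_univ S), Finset.card_univ, hS]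
  rw [← hcard, ← Finset.card_powersetCard]
  apply Finset.card_bij' (fun M _ => M \ S) (fun M' _ => M' ∪ S)
  · intro M hM
    simp only [Finset.mem_filter, Finset.mem_powersetCard] at hM
    obtain ⟨⟨hMu, hMc⟩, hSM⟩ := hM
    simp only [Finset.mem_powersetCard]
    constructor
    · intro x hx
      simp only [Finset.mem_sdiff] at hx ⊢
      exact ⟨Finset.mem_univ x, hx.2⟩
    · rw [Finset.card_sdiff_of_subset hSM, hMc, hS]
  · intro M' hM'
    simp only [Finset.mem_powersetCard] at hM'
    obtain ⟨hM'u, hM'c⟩ := hM'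
    have hdisj : Disjoint M' S := by
      refine Finset.disjoint_left.2 (fun x hx hxS => ?_)
      have := hM'u hx
      simp only [Finset.mem_sdiff] at this
      exact this.2 hxS
    simp only [Finset.mem_filter, Finset.mem_powersetCard]
    refine ⟨⟨Finset.subset_univ _, ?_⟩, Finset.subset_union_right⟩
    rw [Finset.card_union_of_disjoint hdisj, hM'c, hS]
    omega
  · intro M hM
    simp only [Finset.mem_filter, Finset.mem_powersetCard] at hM
    exact Finset.sdiff_union_of_subset hM.2
  · intro M' hM'
    simp only [Finset.mem_powersetCard] at hM'
    have hdisj : Disjoint M' S := by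
      refine Finset.disjoint_left.2 (fun x hx hxS => ?_)
      have := hM'.1 hx
      simp only [Finset.mem_sdiff] at this
      exact this.2 hxS
    rw [Finset.union_sdiff_right]
    exact Finset.sdiff_eq_self_of_disjoint hdisj

lemma subset_small_inter {X : Type*} [Fintype X] [DecidableEq X] {J : Type*} [Fintype J]
    (Lam : J → Finset X) (a l K : ℕ) (ha : ∀ j, (Lam j).card ≤ a) (ha1 : 1 ≤ a)
    (hD : Fintype.card J < 2 ^ l) (hK : 2 * a * K ≤ Fintype.card X) :
    ∃ M : Finset X, M.card = K ∧ ∀ j, (M ∩ Lam j).card ≤ l := by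
  classical
  set N := Fintype.card X with hN
  have hKN : K ≤ N := by nlinarith
  by_cases hcase : K ≤ l
  · obtain ⟨M, -, hMc⟩ := Finset.exists_subset_card_eq
      (show K ≤ (Finset.univ : Finset X).card by rwa [Finset.card_univ])
    refine ⟨M, hMc, fun j => ?_⟩
    calc (M ∩ Lam j).card ≤ M.card := Finset.card_le_card (Finset.inter_subset_left)
      _ = K := hMc
      _ ≤ l := hcase
  push_neg at hcase
  by_contra hbad
  push_neg at hbad
  set P := Finset.powersetCard K (Finset.univ : Finset X) with hP
  have hPcard : P.card = Nat.choose N K := by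
    rw [hP, Finset.card_powersetCard, Finset.card_univ]
  have hbad' : ∀ M ∈ P, ∃ j, l + 1 ≤ (M ∩ Lam j).card := by
    intro M hM
    simp only [hP, Finset.mem_powersetCard] at hM
    obtain ⟨j, hj⟩ := hbad M hM.2
    exact ⟨j, hj⟩
  -- total count
  have hstep1 : P.card ≤ ∑ j : J, (P.filter (fun M => l + 1 ≤ (M ∩ Lam j).card)).card := by
    have h1 : ∀ M ∈ P, 1 ≤ ∑ j : J, (if l + 1 ≤ (M ∩ Lam j).card then 1 else 0) := by
      intro M hM
      obtain ⟨j, hj⟩ := hbad' M hM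
      calc (1 : ℕ) = if l + 1 ≤ (M ∩ Lam j).card then 1 else 0 := by rw [if_pos hj]
        _ ≤ ∑ j : J, (if l + 1 ≤ (M ∩ Lam j).card then 1 else 0) :=
          Finset.single_le_sum (f := fun j => if l + 1 ≤ (M ∩ Lam j).card then (1:ℕ) else 0)
            (fun _ _ => by positivity) (Finset.mem_univ j)
    calc P.card = ∑ _M ∈ P, 1 := by simp
      _ ≤ ∑ M ∈ P, ∑ j : J, (if l + 1 ≤ (M ∩ Lam j).card then 1 else 0) :=
          Finset.sum_le_sum h1
      _ = ∑ j : J, ∑ M ∈ P, (if l + 1 ≤ (M ∩ Lam j).card then 1 else 0) := Finset.sum_comm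
      _ = ∑ j : J, (P.filter (fun M => l + 1 ≤ (M ∩ Lam j).card)).card := by
          refine Finset.sum_congr rfl (fun j _ => ?_)
          rw [Finset.card_filter]
  have hstep2 : ∀ j, (P.filter (fun M => l + 1 ≤ (M ∩ Lam j).card)).card ≤
      Nat.choose a (l + 1) * Nat.choose (N - (l+1)) (K - (l+1)) := by
    intro j
    have hc1 : ∀ M ∈ P, l + 1 ≤ (M ∩ Lam j).card →
        1 ≤ (Finset.powersetCard (l+1) (M ∩ Lam j)).card := by
      intro M _ hMj
      rw [Finset.card_powersetCard]
      exact Nat.choose_pos hMj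
    calc (P.filter (fun M => l + 1 ≤ (M ∩ Lam j).card)).card
        = ∑ M ∈ P, (if l + 1 ≤ (M ∩ Lam j).card then 1 else 0) := by
          rw [Finset.card_filter]
      _ ≤ ∑ M ∈ P, (Finset.powersetCard (l+1) (M ∩ Lam j)).card := by
          refine Finset.sum_le_sum (fun M hM => ?_)
          by_cases h : l + 1 ≤ (M ∩ Lam j).card
          · rw [if_pos h]; exact hc1 M hM h
          · rw [if_neg h]; exact Nat.zero_le _
      _ = ∑ M ∈ P, ((Finset.powersetCard (l+1) (Lam j)).filter (fun S => S ⊆ M)).card := by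
          refine Finset.sum_congr rfl (fun M _ => ?_)
          congr 1
          ext S
          simp only [Finset.mem_powersetCard, Finset.mem_filter, Finset.subset_inter_iff]
          tauto
      _ = ∑ M ∈ P, ∑ S ∈ Finset.powersetCard (l+1) (Lam j), (if S ⊆ M then 1 else 0) := by
          refine Finset.sum_congr rfl (fun M _ => ?_)
          rw [Finset.card_filter]
      _ = ∑ S ∈ Finset.powersetCard (l+1) (Lam j), ∑ M ∈ P, (if S ⊆ M then 1 else 0) :=
          Finset.sum_comm
      _ = ∑ S ∈ Finset.powersetCard (l+1) (Lam j), (P.filter (fun M => S ⊆ M)).card := by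
          refine Finset.sum_congr rfl (fun S _ => ?_)
          rw [Finset.card_filter]
      _ = ∑ S ∈ Finset.powersetCard (l+1) (Lam j),
            Nat.choose (N - (l+1)) (K - (l+1)) := by
          refine Finset.sum_congr rfl (fun S hS => ?_)
          rw [Finset.mem_powersetCard] at hS
          exact contain_count hS.2 (by omega)
      _ = (Finset.powersetCard (l+1) (Lam j)).card * Nat.choose (N - (l+1)) (K - (l+1)) := by
          rw [Finset.sum_const, smul_eq_mul]
      _ ≤ Nat.choose a (l + 1) * Nat.choose (N - (l+1)) (K - (l+1)) := by
          apply Nat.mul_le_mul_right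
          rw [Finset.card_powersetCard]
          exact Nat.choose_le_choose _ (ha j)
  have htotal : Nat.choose N K ≤
      Fintype.card J * (Nat.choose a (l+1) * Nat.choose (N - (l+1)) (K - (l+1))) := by
    calc Nat.choose N K = P.card := hPcard.symm
      _ ≤ ∑ j : J, (P.filter (fun M => l + 1 ≤ (M ∩ Lam j).card)).card := hstep1
      _ ≤ ∑ _j : J, (Nat.choose a (l+1) * Nat.choose (N - (l+1)) (K - (l+1))) :=
          Finset.sum_le_sum (fun j _ => hstep2 j)
      _ = Fintype.card J * (Nat.choose a (l+1) * Nat.choose (N - (l+1)) (K - (l+1))) := by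
          rw [Finset.sum_const, Finset.card_univ, smul_eq_mul]
  -- contradiction
  have hKpos : 1 ≤ K := by omega
  have hchoosepos : 0 < Nat.choose N K := Nat.choose_pos hKN
  have hratio := choose_ratio (l := l + 1) (K := K) (N := N) (by omega) hKN
  have hmain : N ^ (l+1) ≤ Fintype.card J * (a * K) ^ (l+1) := by
    have h1 : Nat.choose N K * N ^ (l+1) ≤
        Nat.choose N K * (Fintype.card J * (a * K) ^ (l+1)) := by
      calc Nat.choose N K * N ^ (l+1)
          ≤ (Fintype.card J * (Nat.choose a (l+1) * Nat.choose (N - (l+1)) (K - (l+1)))) *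
            N ^ (l+1) := Nat.mul_le_mul_right _ htotal
        _ = Fintype.card J * Nat.choose a (l+1) *
            (Nat.choose (N - (l+1)) (K - (l+1)) * N ^ (l+1)) := by ring
        _ ≤ Fintype.card J * Nat.choose a (l+1) * (Nat.choose N K * K ^ (l+1)) :=
            Nat.mul_le_mul_left _ hratio
        _ ≤ Fintype.card J * a ^ (l+1) * (Nat.choose N K * K ^ (l+1)) := by
            apply Nat.mul_le_mul_right
            exact Nat.mul_le_mul_left _ (choose_le_pow a (l+1))
        _ = Nat.choose N K * (Fintype.card J * (a ^ (l+1) * K ^ (l+1))) := by ring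
        _ = Nat.choose N K * (Fintype.card J * (a * K) ^ (l+1)) := by
            rw [mul_pow]
    exact Nat.le_of_mul_le_mul_left (by linarith [h1]) hchoosepos
  have hupper : Fintype.card J * (a * K) ^ (l+1) < 2 ^ (l+1) * (a * K) ^ (l+1) := by
    have hKa : 0 < a * K := by positivity
    have : Fintype.card J < 2 ^ (l+1) := by
      calc Fintype.card J < 2 ^ l := hD
        _ ≤ 2 ^ (l+1) := Nat.pow_le_pow_right (by norm_num) (Nat.le_succ l)
    exact (Nat.mul_lt_mul_right (pow_pos hKa _)).2 this
  have hlower : 2 ^ (l+1) * (a * K) ^ (l+1) ≤ N ^ (l+1) := by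
    calc 2 ^ (l+1) * (a * K) ^ (l+1) = (2 * (a * K)) ^ (l+1) := (mul_pow 2 (a * K) (l+1)).symm
      _ ≤ N ^ (l+1) := Nat.pow_le_pow_left (by rw [← mul_assoc]; exact hK) _
  omega

end NatLemmas

section Cover

def IndepSet (E : V → V → Prop) {t : ℕ} (S : Finset (V → Str t)) : Prop :=
  ∀ x ∈ S, ∀ y ∈ S, ¬ Conf E x y

def f2add (a b : Fin 2) : Fin 2 := if a = b then 0 else 1

lemma f2add_cancel : ∀ a b : Fin 2, f2add a (f2add a b) = b := by decide

lemma f2add_cancel' : ∀ a c : Fin 2, f2add (f2add a c) c = a := by decide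

lemma f2add_inj : ∀ a b b' : Fin 2, f2add a b = f2add a b' → b = b' := by decide

def tr {t : ℕ} (z σ : V → Str t) : V → Str t := fun w i => f2add (z w i) (σ w i)

lemma tr_tr {t : ℕ} (z σ : V → Str t) : tr z (tr z σ) = σ := by
  funext w i
  exact f2add_cancel _ _

lemma tr_tr' {t : ℕ} (y σ : V → Str t) : tr (tr y σ) σ = y := by
  funext w i
  exact f2add_cancel' _ _

lemma tr_conf (E : V → V → Prop) {t : ℕ} (z : V → Str t) {x x' : V → Str t}
    (h : Conf E x x') : Conf E (tr z x) (tr z x') := by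
  obtain ⟨j, hag, hne⟩ := h
  refine ⟨j, fun i hi => ?_, fun he => hne ?_⟩
  · funext ii
    simp only [tr]
    rw [hag i hi]
  · funext ii
    exact f2add_inj _ _ _ (congrFun he ii)

lemma count_pi {α : Type*} [Fintype α] [DecidableEq α] (p : α → Prop) (k : ℕ) :
    ((Finset.univ : Finset (Fin k → α)).filter (fun zs => ∀ i, p (zs i))).card =
      ((Finset.univ.filter p).card) ^ k := by
  classical
  have he : (Finset.univ.filter fun zs : Fin k → α => ∀ i, p (zs i)) =
      Fintype.piFinset (fun _ : Fin k => Finset.univ.filter p) := by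
    ext zs
    simp [Fintype.mem_piFinset]
  rw [he, Fintype.card_piFinset]
  simp

lemma tr_count {t : ℕ} [Fintype V] (σ : V → Str t) (A : Finset (V → Str t)) :
    ((Finset.univ : Finset (V → Str t)).filter (fun z => tr z σ ∈ A)).card = A.card := by
  classical
  apply Finset.card_bij (fun z _ => tr z σ)
  · intro z hz
    simp only [Finset.mem_filter] at hz
    exact hz.2
  · intro z hz z' hz' he
    have := congrArg (fun y => tr y σ) he
    simpa [tr_tr'] using this
  · intro y hy
    refine ⟨tr y σ, ?_, tr_tr' y σ⟩
    simp only [Finset.mem_filter]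
    exact ⟨Finset.mem_univ _, by rwa [tr_tr']⟩

lemma cover_arith {N a c u k : ℕ} (ha1 : 1 ≤ a) (haN : a ≤ N) (hca : N ≤ c * a)
    (hN2 : N < 2 ^ u) (hN1 : 1 ≤ N) (hk : k = c * u) (hu : 1 ≤ u) :
    N * (N - a) ^ k < N ^ k := by
  have hc1 : 1 ≤ c := by
    rcases Nat.eq_zero_or_pos c with h | h
    · subst h; simp at hca; omega
    · exact h
  have hk1 : 1 ≤ k := by
    rw [hk]
    exact Nat.one_le_iff_ne_zero.2 (Nat.mul_ne_zero (by omega) (by omega))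
  rcases Nat.eq_or_lt_of_le haN with heq | hlt
  · subst heq
    have : a - a = 0 := by omega
    rw [this, zero_pow (by omega), Nat.mul_zero]
    exact pow_pos (by omega) k
  · have hNpos : (0 : ℝ) < N := by exact_mod_cast hN1
    set x : ℝ := ((N : ℝ) - a) / N with hx
    have haR : (a : ℝ) ≤ N := by exact_mod_cast haN
    have hx0 : 0 ≤ x := by
      apply div_nonneg _ (le_of_lt hNpos); linarith
    have hbase : x ≤ Real.exp (-((a : ℝ) / N)) := by
      have h := Real.add_one_le_exp (-((a : ℝ) / N))
      have he : -((a : ℝ) / N) + 1 = x := by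
        rw [hx]; field_simp; ring
      linarith [he ▸ h]
    have hxc : x ^ c ≤ 1 / 2 := by
      have h1 : x ^ c ≤ Real.exp (-((a : ℝ) / N)) ^ c := pow_le_pow_left₀ hx0 hbase c
      have h2 : Real.exp (-((a : ℝ) / N)) ^ c = Real.exp ((c : ℝ) * (-((a : ℝ) / N))) := by
        rw [← Real.exp_nat_mul]
      have h3 : (c : ℝ) * (-((a : ℝ) / N)) ≤ -1 := by
        have he2 : (c : ℝ) * ((a : ℝ) / N) = ((c : ℝ) * a) / N := by ring
        rw [mul_neg, neg_le_neg_iff, he2, le_div_iff₀ hNpos, one_mul]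
        exact_mod_cast hca
      have h4 : Real.exp ((c : ℝ) * (-((a : ℝ) / N))) ≤ Real.exp (-1) := Real.exp_le_exp.2 h3
      have h2e : (2 : ℝ) ≤ Real.exp 1 := by linarith [Real.add_one_le_exp (1 : ℝ)]
      have h5 : Real.exp (-1 : ℝ) ≤ 1 / 2 := by
        rw [Real.exp_neg, one_div]
        exact inv_anti₀ (by norm_num) h2e
      calc x ^ c ≤ Real.exp (-((a : ℝ) / N)) ^ c := h1
        _ = Real.exp ((c : ℝ) * (-((a : ℝ) / N))) := h2
        _ ≤ Real.exp (-1) := h4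
        _ ≤ 1 / 2 := h5
    have hsubR : ((N - a : ℕ) : ℝ) = x * N := by
      rw [hx, div_mul_cancel₀ _ (ne_of_gt hNpos)]
      exact Nat.cast_sub haN
    have hxk : ((N - a : ℕ) : ℝ) ^ k = x ^ k * (N : ℝ) ^ k := by
      rw [hsubR, mul_pow]
    have hxku : x ^ k ≤ (1 / 2 : ℝ) ^ u := by
      have : x ^ k = (x ^ c) ^ u := by rw [← pow_mul, hk]
      rw [this]
      exact pow_le_pow_left₀ (by positivity) hxc u
    have h9 : (N : ℝ) * (1 / 2 : ℝ) ^ u < 1 := by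
      have h2u : (0 : ℝ) < (2 : ℝ) ^ u := by positivity
      have hN2R : (N : ℝ) < (2 : ℝ) ^ u := by exact_mod_cast hN2
      rw [one_div, inv_pow, ← div_eq_mul_inv, div_lt_one h2u]
      exact hN2R
    have hfin : (N : ℝ) * ((N - a : ℕ) : ℝ) ^ k < (N : ℝ) ^ k := by
      calc (N : ℝ) * ((N - a : ℕ) : ℝ) ^ k = ((N : ℝ) * x ^ k) * (N : ℝ) ^ k := by
            rw [hxk]; ring
        _ ≤ ((N : ℝ) * (1 / 2) ^ u) * (N : ℝ) ^ k := by
            apply mul_le_mul_of_nonneg_right _ (by positivity)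
            exact mul_le_mul_of_nonneg_left hxku (by positivity)
        _ < 1 * (N : ℝ) ^ k := by
            apply mul_lt_mul_of_pos_right h9 (by positivity)
        _ = (N : ℝ) ^ k := one_mul _
  -- cast back
    exact_mod_cast hfin

lemma cover {W : Type*} (FE : W → W → Prop) [Fintype W] [Nonempty W] {t : ℕ} (ht : 1 ≤ t) :
    ∃ a rc : ℕ, 1 ≤ a ∧
      (∀ B : Finset (W → Str t), IndepSet FE B → B.card ≤ a) ∧
      (t : ℝ) * IC.broadcastRate FE ≤ (rc : ℝ) ∧
      a * 2 ^ rc ≤ 8 * (t * Fintype.card W + 1) * 2 ^ (t * Fintype.card W) := by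
  classical
  set m := Fintype.card W with hm
  set N := 2 ^ (t * m) with hN
  have hNcard : Fintype.card (W → Str t) = N := card_msgs t
  set fam := (Finset.univ : Finset (Finset (W → Str t))).filter
    (fun S => IndepSet FE S) with hfam
  have hx0 : (({(fun _ _ => 0 : W → Str t)}) : Finset (W → Str t)) ∈ fam := by
    simp only [hfam, Finset.mem_filter]
    refine ⟨Finset.mem_univ _, ?_⟩
    intro x hx y hy hconf
    simp only [Finset.mem_singleton] at hx hy
    obtain ⟨j, -, hne⟩ := hconf
    rw [hx, hy] at hne
    exact hne rfl
  obtain ⟨A, hAfam, hAmax⟩ := Finset.exists_max_image fam Finset.card ⟨_, hx0⟩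
  have hAindep : IndepSet FE A := (Finset.mem_filter.1 hAfam).2
  set a := A.card with ha
  have ha1 : 1 ≤ a := by
    have h := hAmax _ hx0
    simpa using h
  have hmax : ∀ B : Finset (W → Str t), IndepSet FE B → B.card ≤ a := by
    intro B hB
    exact hAmax B (by simp [hfam, hB])
  have haN : a ≤ N := by
    rw [ha, ← hNcard, ← Finset.card_univ]
    exact Finset.card_le_card (Finset.subset_univ A)
  set c := N / a + 1 with hc
  set u := t * m + 1 with hu
  set k := c * u with hk
  have hca : N ≤ c * a := by
    have h1 := Nat.div_add_mod N a
    have h2 := Nat.mod_lt N (show 0 < a from ha1)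
    have h3 : c * a = a * (N / a) + a := by rw [hc]; ring
    omega
  have hN1 : 1 ≤ N := Nat.one_le_two_pow
  have hN2 : N < 2 ^ u := by
    rw [hN, hu]
    exact Nat.pow_lt_pow_right (by norm_num) (by omega)
  have hu1 : 1 ≤ u := by omega
  have hex : ∃ zs : Fin k → (W → Str t), ∀ σ, ∃ i, tr (zs i) σ ∈ A := by
    by_contra hcon
    push_neg at hcon
    have h1 : ∀ zs : Fin k → (W → Str t),
        1 ≤ (Finset.univ.filter (fun σ : W → Str t => ∀ i, tr (zs i) σ ∉ A)).card := by
      intro zs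
      obtain ⟨σ, hσ⟩ := hcon zs
      refine Finset.card_pos.2 ⟨σ, ?_⟩
      simp only [Finset.mem_filter]
      exact ⟨Finset.mem_univ _, hσ⟩
    have hbig : N ^ k ≤ N * (N - a) ^ k := by
      have hcards : Fintype.card (Fin k → (W → Str t)) = N ^ k := by
        rw [Fintype.card_fun, hNcard, Fintype.card_fin]
      calc N ^ k = ∑ _zs : Fin k → (W → Str t), 1 := by
            rw [Finset.sum_const, Finset.card_univ, hcards, smul_eq_mul, mul_one]
        _ ≤ ∑ zs : Fin k → (W → Str t),
              (Finset.univ.filter (fun σ : W → Str t => ∀ i, tr (zs i) σ ∉ A)).card :=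
            Finset.sum_le_sum (fun zs _ => h1 zs)
        _ = ∑ zs : Fin k → (W → Str t), ∑ σ : W → Str t,
              (if ∀ i, tr (zs i) σ ∉ A then 1 else 0) := by
            refine Finset.sum_congr rfl (fun zs _ => ?_)
            rw [Finset.card_filter]
        _ = ∑ σ : W → Str t, ∑ zs : Fin k → (W → Str t),
              (if ∀ i, tr (zs i) σ ∉ A then 1 else 0) := Finset.sum_comm
        _ = ∑ σ : W → Str t,
              (Finset.univ.filter
                (fun zs : Fin k → (W → Str t) => ∀ i, tr (zs i) σ ∉ A)).card := by
            refine Finset.sum_congr rfl (fun σ _ => ?_)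
            rw [Finset.card_filter]
        _ = ∑ σ : W → Str t,
              ((Finset.univ.filter (fun z : W → Str t => tr z σ ∉ A)).card) ^ k := by
            refine Finset.sum_congr rfl (fun σ _ => ?_)
            have hcp := count_pi (fun z : W → Str t => tr z σ ∉ A) k
            convert hcp using 3
            ext z
            simp
        _ = ∑ _σ : W → Str t, (N - a) ^ k := by
            refine Finset.sum_congr rfl (fun σ _ => ?_)
            congr 1
            rw [Finset.filter_not, Finset.card_sdiff_of_subset (Finset.filter_subset _ _)]
            rw [tr_count σ A, Finset.card_univ, hNcard, ← ha]
        _ = N * (N - a) ^ k := by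
            rw [Finset.sum_const, Finset.card_univ, hNcard, smul_eq_mul]
    have harith := cover_arith ha1 haN hca hN2 hN1 hk hu1
    exact lt_irrefl _ (lt_of_lt_of_le harith hbig)
  obtain ⟨zs, hcov⟩ := hex
  set col : (W → Str t) → Fin k := fun σ => (hcov σ).choose with hcol
  have hcolmem : ∀ σ, tr (zs (col σ)) σ ∈ A := fun σ => (hcov σ).choose_spec
  have hproper : Proper FE col := by
    intro x x' hconf heq
    have h1 : tr (zs (col x)) x ∈ A := hcolmem x
    have h2 : tr (zs (col x)) x' ∈ A := by rw [heq]; exact hcolmem x'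
    exact hAindep _ h1 _ h2 (tr_conf FE _ hconf)
  set rc := Nat.log 2 c + Nat.log 2 u + 2 with hrc
  have hc1 : 1 ≤ c := by rw [hc]; exact Nat.le_add_left 1 _
  have hk2 : k ≤ 2 ^ rc := by
    have e1 : c < 2 ^ (Nat.log 2 c + 1) := Nat.lt_pow_succ_log_self (by norm_num) c
    have e2 : u < 2 ^ (Nat.log 2 u + 1) := Nat.lt_pow_succ_log_self (by norm_num) u
    calc k = c * u := hk
      _ ≤ 2 ^ (Nat.log 2 c + 1) * 2 ^ (Nat.log 2 u + 1) :=
        Nat.mul_le_mul (le_of_lt e1) (le_of_lt e2)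
      _ = 2 ^ rc := by rw [← pow_add, hrc]; congr 1; omega
  have hcode : IC.HasCode FE (fun _ => t) rc :=
    hasCode_of_proper FE hproper (by rw [Fintype.card_fin]; exact hk2)
  refine ⟨a, rc, ha1, hmax, ?_, ?_⟩
  · have hmem : ((rc : ℝ) / t) ∈ rset FE := ⟨t, rc, ht, hcode, rfl⟩
    have hble := beta_le_of_mem FE hmem
    have htpos : (0 : ℝ) < t := by exact_mod_cast ht
    rw [mul_comm]
    exact (le_div_iff₀ htpos).1 hble
  · have e3 : 2 ^ rc ≤ 4 * (c * u) := by
      have f1 : 2 ^ Nat.log 2 c ≤ c := Nat.pow_log_le_self 2 (by omega)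
      have f2 : 2 ^ Nat.log 2 u ≤ u := Nat.pow_log_le_self 2 (by omega)
      calc 2 ^ rc = 2 ^ Nat.log 2 c * 2 ^ Nat.log 2 u * 4 := by
            rw [hrc, pow_add, pow_add]; norm_num
        _ ≤ c * u * 4 := Nat.mul_le_mul (Nat.mul_le_mul f1 f2) (le_refl 4)
        _ = 4 * (c * u) := by ring
    have e4 : a * c ≤ 2 * N := by
      have f3 : a * (N / a) ≤ N := by
        rw [mul_comm]
        exact Nat.div_mul_le_self N a
      calc a * c = a * (N / a) + a := by rw [hc]; ring
        _ ≤ N + N := Nat.add_le_add f3 haN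
        _ = 2 * N := by ring
    calc a * 2 ^ rc ≤ a * (4 * (c * u)) := Nat.mul_le_mul_left a e3
      _ = (a * c) * (4 * u) := by ring
      _ ≤ (2 * N) * (4 * u) := Nat.mul_le_mul_right _ e4
      _ = 8 * u * N := by ring
      _ = 8 * (t * m + 1) * 2 ^ (t * m) := by rw [hu, hN]

end Cover

section Core

lemma rank_lt {α : Type*} [Fintype α] (π : α ≃ Fin (Fintype.card α)) (Q : Finset α)
    {s : α} (hs : s ∈ Q) :
    (Q.filter (fun x => π x < π s)).card < Q.card := by
  classical
  have hsub : Q.filter (fun x => π x < π s) ⊆ Q.erase s := by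
    intro x hx
    simp only [Finset.mem_filter] at hx
    refine Finset.mem_erase.2 ⟨?_, hx.1⟩
    intro hxs
    rw [hxs] at hx
    exact lt_irrefl _ hx.2
  calc (Q.filter (fun x => π x < π s)).card ≤ (Q.erase s).card := Finset.card_le_card hsub
    _ = Q.card - 1 := Finset.card_erase_of_mem hs
    _ < Q.card := Nat.sub_lt (Finset.card_pos.2 ⟨s, hs⟩) one_pos

lemma rank_inj {α : Type*} [Fintype α] (π : α ≃ Fin (Fintype.card α)) (Q : Finset α)
    {s s' : α} (hs : s ∈ Q) (hs' : s' ∈ Q)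
    (h : (Q.filter (fun x => π x < π s)).card = (Q.filter (fun x => π x < π s')).card) :
    s = s' := by
  classical
  have key : ∀ u u' : α, u ∈ Q → u' ∈ Q → π u < π u' →
      (Q.filter (fun x => π x < π u)).card < (Q.filter (fun x => π x < π u')).card := by
    intro u u' hu hu' hlt
    apply Finset.card_lt_card
    constructor
    · intro x hx
      simp only [Finset.mem_filter] at hx ⊢
      exact ⟨hx.1, lt_trans hx.2 hlt⟩
    · intro hcon
      have : u ∈ Q.filter (fun x => π x < π u') := by
        simp only [Finset.mem_filter]; exact ⟨hu, hlt⟩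
      have := hcon this
      simp only [Finset.mem_filter] at this
      exact lt_irrefl _ this.2
  rcases lt_trichotomy (π s) (π s') with hlt | heq | hgt
  · exact absurd h (ne_of_lt (key s s' hs hs' hlt))
  · exact π.injective heq
  · exact absurd h.symm (ne_of_lt (key s' s hs' hs hgt))

variable {W : Type*}

lemma lam_eq (GE : V → V → Prop) (FE : W → W → Prop) [Fintype V] [Fintype W]
    {t' r' : ℕ} (φ : ((V × W) → Str t') → Str r') (v : V) (y : Str r')
    {b b' : V → (W → Str t')} (hbb : ∀ i, GE i v → b i = b' i) :
    (Finset.univ.filter (fun s : W → Str t' => ∃ Xf : (V × W) → Str t',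
        φ Xf = y ∧ (∀ i, GE i v → ∀ w, Xf (i, w) = b i w) ∧ (∀ w, Xf (v, w) = s w))) =
    (Finset.univ.filter (fun s : W → Str t' => ∃ Xf : (V × W) → Str t',
        φ Xf = y ∧ (∀ i, GE i v → ∀ w, Xf (i, w) = b' i w) ∧ (∀ w, Xf (v, w) = s w))) := by
  classical
  ext s
  simp only [Finset.mem_filter, Finset.mem_univ, true_and]
  constructor
  · rintro ⟨X, h1, h2, h3⟩
    exact ⟨X, h1, fun i hi w => by rw [h2 i hi w, hbb i hi], h3⟩
  · rintro ⟨X, h1, h2, h3⟩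
    exact ⟨X, h1, fun i hi w => by rw [h2 i hi w, hbb i hi], h3⟩

lemma core (GE : V → V → Prop) (FE : W → W → Prop) [Fintype V] [Fintype W]
    {t' r' a T : ℕ}
    (hcode : IC.HasCode (IC.lexProd GE FE) (fun _ => t') r')
    (ha1 : 1 ≤ a)
    (hmax : ∀ B : Finset (W → Str t'), IndepSet FE B → B.card ≤ a)
    (hT : 2 * a * 2 ^ T ≤ 2 ^ (t' * Fintype.card W)) :
    IC.HasCode GE (fun _ => T)
      (r' + Fintype.card V *
        (Nat.log 2 (r' + Fintype.card V * (t' * Fintype.card W) + Fintype.card V + 1) + 1)) := by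
  classical
  set n := Fintype.card V with hn
  set m := Fintype.card W with hm
  set l := r' + n * (t' * m) + n + 1 with hl
  set L := Nat.log 2 l + 1 with hL
  have hl1 : 1 ≤ l := by omega
  obtain ⟨φ, hφ⟩ := proper_of_hasCode (IC.lexProd GE FE) hcode
  -- the list family
  set Lam : V × Str r' × (V → (W → Str t')) → Finset (W → Str t') :=
    fun j => Finset.univ.filter (fun s : W → Str t' => ∃ Xf : (V × W) → Str t',
      φ Xf = j.2.1 ∧ (∀ i, GE i j.1 → ∀ w, Xf (i, w) = j.2.2 i w) ∧
      (∀ w, Xf (j.1, w) = s w)) with hLam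
  have hLamindep : ∀ j, IndepSet FE (Lam j) := by
    rintro ⟨v, y, b⟩ s hsmem s' hs'mem hconf
    simp only [hLam, Finset.mem_filter] at hsmem hs'mem
    obtain ⟨-, X, hX1, hX2, hX3⟩ := hsmem
    obtain ⟨-, X', hX'1, hX'2, hX'3⟩ := hs'mem
    obtain ⟨w, hagw, hnew⟩ := hconf
    have hconflex : Conf (IC.lexProd GE FE) X X' := by
      refine ⟨(v, w), ?_, ?_⟩
      · rintro ⟨i, w''⟩ hedge
        rcases hedge with hGE | ⟨hiv, hFE⟩
        · rw [hX2 i hGE w'', hX'2 i hGE w'']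
        · simp only at hiv
          subst hiv
          rw [hX3 w'', hX'3 w'']
          rw [hagw w'' hFE]
      · intro he
        apply hnew
        have h1 := hX3 w
        have h2 := hX'3 w
        rw [← h1, ← h2, he]
    exact hφ _ _ hconflex (hX1.trans hX'1.symm)
  have hLamcard : ∀ j, (Lam j).card ≤ a := fun j => hmax _ (hLamindep j)
  -- cardinality of index type
  have hcardSig : Fintype.card (W → Str t') = 2 ^ (t' * m) := card_msgs t'
  have hD : Fintype.card (V × Str r' × (V → (W → Str t'))) < 2 ^ l := by
    have hc1 : Fintype.card (V × Str r' × (V → (W → Str t'))) =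
        n * (2 ^ r' * (2 ^ (t' * m)) ^ n) := by
      rw [Fintype.card_prod, Fintype.card_prod, card_str, Fintype.card_fun, hcardSig]
    rw [hc1]
    have h2 : n < 2 ^ n := Nat.lt_two_pow_self
    have h3 : (2:ℕ) ^ r' * (2 ^ (t' * m)) ^ n > 0 := by positivity
    calc n * (2 ^ r' * (2 ^ (t' * m)) ^ n) < 2 ^ n * (2 ^ r' * (2 ^ (t' * m)) ^ n) :=
          (Nat.mul_lt_mul_right h3).2 h2
      _ = 2 ^ (n + (r' + t' * m * n)) := by
          rw [← pow_mul, ← pow_add, ← pow_add]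
      _ ≤ 2 ^ l := by
          apply Nat.pow_le_pow_right (by norm_num)
          rw [hl]
          have : n * (t' * m) = t' * m * n := by ring
          omega
  -- choose the subset M
  obtain ⟨M, hMcard, hMint⟩ := subset_small_inter Lam a l (2 ^ T) hLamcard ha1 hD
    (by rw [hcardSig]; exact hT)
  -- the embedding of messages into M
  have hcardT : Fintype.card (Str T) = Fintype.card {x // x ∈ M} := by
    rw [card_str, Fintype.card_coe, hMcard]
  set eq := Fintype.equivOfCardEq hcardT with heq
  set eι : Str T → (W → Str t') := fun u => (eq u : W → Str t') with heι
  have heinj : Function.Injective eι := by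
    intro u u' h
    exact eq.injective (Subtype.ext h)
  have heM : ∀ u, eι u ∈ M := fun u => (eq u).2
  -- block map
  set XB : (V → Str T) → ((V × W) → Str t') := fun xh p => eι (xh p.1) p.2 with hXB
  -- rank function
  set π := Fintype.equivFin (W → Str t') with hπ
  set rank : Finset (W → Str t') → (W → Str t') → ℕ :=
    fun Q s => (Q.filter (fun x => π x < π s)).card with hrank
  -- the color map
  set color : (V → Str T) → Str r' × (V → Fin l) := fun xh =>
    (φ (XB xh), fun v => ⟨rank (M ∩ Lam (v, φ (XB xh), fun i => eι (xh i))) (eι (xh v)) % l,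
      Nat.mod_lt _ (by omega)⟩) with hcolor
  have hproper : Proper GE color := by
    rintro xh xh' ⟨v, hag, hne⟩ hEq
    have hy : φ (XB xh) = φ (XB xh') := congrArg Prod.fst hEq
    set y := φ (XB xh) with hyy
    set b : V → (W → Str t') := fun i => eι (xh i) with hb
    set b' : V → (W → Str t') := fun i => eι (xh' i) with hb'
    have hbb : ∀ i, GE i v → b i = b' i := fun i hi => congrArg eι (hag i hi)
    have hLameq : Lam (v, y, b) = Lam (v, y, b') := lam_eq GE FE φ v y hbb
    have hsmem : eι (xh v) ∈ M ∩ Lam (v, y, b) := by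
      refine Finset.mem_inter.2 ⟨heM _, ?_⟩
      simp only [hLam, Finset.mem_filter]
      exact ⟨Finset.mem_univ _, XB xh, rfl, fun i hi w => rfl, fun w => rfl⟩
    have hs'mem : eι (xh' v) ∈ M ∩ Lam (v, y, b) := by
      rw [hLameq]
      refine Finset.mem_inter.2 ⟨heM _, ?_⟩
      simp only [hLam, Finset.mem_filter]
      exact ⟨Finset.mem_univ _, XB xh', hy.symm, fun i hi w => rfl, fun w => rfl⟩
    set Q := M ∩ Lam (v, y, b) with hQ
    have hQcard : Q.card ≤ l := hMint _
    have hr1 : rank Q (eι (xh v)) < l := lt_of_lt_of_le (rank_lt π Q hsmem) hQcard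
    have hr2 : rank Q (eι (xh' v)) < l := lt_of_lt_of_le (rank_lt π Q hs'mem) hQcard
    have hEq2 := congrArg Prod.snd hEq
    have hEq3 := congrFun hEq2 v
    have hEq4 : rank (M ∩ Lam (v, φ (XB xh), fun i => eι (xh i))) (eι (xh v)) % l =
        rank (M ∩ Lam (v, φ (XB xh'), fun i => eι (xh' i))) (eι (xh' v)) % l := by
      have := congrArg Fin.val hEq3
      exact this
    have hQ' : M ∩ Lam (v, φ (XB xh'), fun i => eι (xh' i)) = Q := by
      rw [hQ, ← hy, hLameq]
    rw [hQ'] at hEq4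
    have hEq5 : rank Q (eι (xh v)) = rank Q (eι (xh' v)) := by
      rwa [Nat.mod_eq_of_lt hr1, Nat.mod_eq_of_lt hr2] at hEq4
    have := rank_inj π Q hsmem hs'mem hEq5
    exact hne (heinj this)
  refine hasCode_of_proper GE hproper ?_
  have hcl : Fintype.card (Str r' × (V → Fin l)) = 2 ^ r' * l ^ n := by
    rw [Fintype.card_prod, card_str, Fintype.card_fun, Fintype.card_fin]
  rw [hcl]
  have hlL : l ≤ 2 ^ L := le_of_lt (Nat.lt_pow_succ_log_self (by norm_num) l)
  calc 2 ^ r' * l ^ n ≤ 2 ^ r' * (2 ^ L) ^ n :=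
        Nat.mul_le_mul_left _ (Nat.pow_le_pow_left hlL n)
    _ = 2 ^ (r' + n * L) := by rw [← pow_mul, ← pow_add]; congr 1; ring
    _ = 2 ^ (r' + n * (Nat.log 2 (r' + n * (t' * m) + n + 1) + 1)) := by rw [hL, hl]

end Core

section HardDir
variable {W : Type*}

lemma hasCode_pow (E : V → V → Prop) [Fintype V] {t r : ℕ}
    (h : IC.HasCode E (fun _ => t) r) (k : ℕ) :
    IC.HasCode E (fun _ => k * t) (k * r) := by
  obtain ⟨φ, hφ⟩ := proper_of_hasCode E h
  refine hasCode_of_proper E (proper_power E hφ k) ?_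
  rw [Fintype.card_fun, card_str, Fintype.card_fin, ← pow_mul, mul_comm r k]

lemma dir_ge [Fintype V] [Fintype W] [Nonempty V] [Nonempty W]
    (GE : V → V → Prop) (hG : ∀ v, ¬ GE v v)
    (FE : W → W → Prop) (hF : ∀ w, ¬ FE w w) :
    IC.broadcastRate GE * IC.broadcastRate FE ≤ IC.broadcastRate (IC.lexProd GE FE) := by
  classical
  set βG := IC.broadcastRate GE with hβG
  set βF := IC.broadcastRate FE with hβF
  have hβG1 : 1 ≤ βG := one_le_beta GE hG
  have hβF1 : 1 ≤ βF := one_le_beta FE hF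
  have hβG0 : 0 ≤ βG := by linarith
  set n := Fintype.card V with hn
  set m := Fintype.card W with hm
  have hn1 : 1 ≤ n := Fintype.card_pos
  have hm1 : 1 ≤ m := Fintype.card_pos
  have hβGn : βG ≤ (n : ℝ) := beta_le_card GE
  apply le_beta
  rintro ρ ⟨t₀, r₀, ht₀, hcode₀, rfl⟩
  have ht₀R : (0 : ℝ) < t₀ := by exact_mod_cast ht₀
  rw [le_div_iff₀ ht₀R]
  refine le_of_forall_pos_le_add (fun δ hδ => ?_)
  -- constants
  set C₁ := r₀ + n * t₀ * m + n + 1 with hC₁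
  set S := Nat.sqrt C₁ + 1 with hS
  set C₂ := 4 * S + 6 with hC₂
  obtain ⟨q₀, hq₀⟩ := exists_nat_gt ((n * C₂ : ℝ) / δ)
  set q := q₀ + C₂ + 1 with hq
  have hq1 : 1 ≤ q := by omega
  have hqC₂ : C₂ + 1 ≤ q := by omega
  have hqR : ((n * C₂ : ℝ)) / δ < q := by
    calc ((n * C₂ : ℝ)) / δ < q₀ := hq₀
      _ ≤ q := by exact_mod_cast Nat.le_add_right q₀ (C₂ + 1)
  have hqRpos : (0 : ℝ) < q := by
    have : (1 : ℕ) ≤ q := hq1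
    exact_mod_cast this
  set k := q * q with hk
  have hk1 : 1 ≤ k := Nat.mul_pos hq1 hq1
  set t' := k * t₀ with ht'
  set r' := k * r₀ with hr'
  have ht'1 : 1 ≤ t' := Nat.mul_pos hk1 ht₀
  have hcode' : IC.HasCode (IC.lexProd GE FE) (fun _ => t') r' := hasCode_pow _ hcode₀ k
  -- cover
  obtain ⟨a, rc, ha1, hmax, hcovβ, hcovbound⟩ := cover FE (t := t') ht'1
  set u := t' * m + 1 with hu
  set s := Nat.log 2 u + 5 with hs
  set l' := r' + n * (t' * m) + n + 1 with hl'
  -- nat bounds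
  have hC₁S : C₁ ≤ S * S := by
    have h1 := Nat.lt_succ_sqrt C₁
    rw [Nat.succ_eq_add_one] at h1
    rw [hS]
    exact le_of_lt h1
  have hsqrtkC₁ : Nat.sqrt (k * C₁) ≤ q * S := by
    have h1 : k * C₁ ≤ (q * S) * (q * S) := by
      calc k * C₁ = q * q * C₁ := by rw [hk]
        _ ≤ q * q * (S * S) := Nat.mul_le_mul_left _ hC₁S
        _ = (q * S) * (q * S) := by ring
    calc Nat.sqrt (k * C₁) ≤ Nat.sqrt ((q * S) * (q * S)) := Nat.sqrt_le_sqrt h1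
      _ = q * S := Nat.sqrt_eq (q * S)
  have hl'C₁ : l' ≤ k * C₁ := by
    have h1 : l' = k * r₀ + k * (n * t₀ * m) + (n + 1) := by
      rw [hl', hr', ht']; ring
    have h2 : n + 1 ≤ k * (n + 1) := Nat.le_mul_of_pos_left _ (by omega)
    calc l' = k * r₀ + k * (n * t₀ * m) + (n + 1) := h1
      _ ≤ k * r₀ + k * (n * t₀ * m) + k * (n + 1) := by omega
      _ = k * C₁ := by rw [hC₁]; ring
  have huC₁ : u ≤ k * C₁ := by
    have h1 : u = k * (t₀ * m) + 1 := by rw [hu, ht']; ring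
    have h4 : k * (t₀ * m) ≤ k * (n * t₀ * m) := by
      refine Nat.mul_le_mul (le_refl k) ?_
      calc t₀ * m = 1 * (t₀ * m) := (one_mul _).symm
        _ ≤ n * (t₀ * m) := Nat.mul_le_mul_right _ hn1
        _ = n * t₀ * m := (mul_assoc n t₀ m).symm
    have h3 : 1 ≤ k * (r₀ + n + 1) := Nat.mul_pos hk1 (by omega)
    rw [h1]
    have h5 : k * C₁ = k * (n * t₀ * m) + k * (r₀ + n + 1) := by rw [hC₁]; ring
    rw [h5]
    exact Nat.add_le_add h4 h3
  have hlogl' : Nat.log 2 l' ≤ 2 * (q * S) := by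
    calc Nat.log 2 l' ≤ 2 * Nat.sqrt l' := log_le_two_sqrt l'
      _ ≤ 2 * Nat.sqrt (k * C₁) := by
          have := Nat.sqrt_le_sqrt hl'C₁
          omega
      _ ≤ 2 * (q * S) := by omega
  have hlogu : Nat.log 2 u ≤ 2 * (q * S) := by
    calc Nat.log 2 u ≤ 2 * Nat.sqrt u := log_le_two_sqrt u
      _ ≤ 2 * Nat.sqrt (k * C₁) := by
          have := Nat.sqrt_le_sqrt huC₁
          omega
      _ ≤ 2 * (q * S) := by omega
  have hsqc : s ≤ q * C₂ := by
    have h1 : s = Nat.log 2 u + 5 := hs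
    have h2 : q * C₂ = 4 * (q * S) + 6 * q := by rw [hC₂]; ring
    omega
  have hA4 : Nat.log 2 l' + 1 + s ≤ q * C₂ := by
    have h2 : q * C₂ = 4 * (q * S) + 6 * q := by rw [hC₂]; ring
    omega
  have hst' : s + 1 ≤ t' := by
    have h1 : q * C₂ + 1 ≤ k := by
      calc q * C₂ + 1 ≤ q * C₂ + q := by omega
        _ = q * (C₂ + 1) := by ring
        _ ≤ q * q := Nat.mul_le_mul_left q hqC₂
        _ = k := hk.symm
    have h2 : k ≤ t' := Nat.le_mul_of_pos_right k ht₀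
    omega
  -- rc ≥ t'
  have hrct' : t' ≤ rc := by
    have h1 : (t' : ℝ) ≤ (t' : ℝ) * βF := by nlinarith [ht'1]
    have h2 : (t' : ℝ) ≤ rc := le_trans h1 hcovβ
    exact_mod_cast h2
  set T := rc - s with hT
  have hT1 : 1 ≤ T := by omega
  have hTs : T + s = rc := by omega
  -- 2 * a * 2^T ≤ 2^(t'*m)
  have h16u : 16 * u ≤ 2 ^ s := by
    have h1 : u < 2 ^ (Nat.log 2 u + 1) := Nat.lt_pow_succ_log_self (by norm_num) u
    have h2 : 2 ^ s = 2 ^ (Nat.log 2 u + 1) * 16 := by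
      rw [hs, pow_add, pow_add]; ring_nf
    omega
  have hT2 : 2 * a * 2 ^ T ≤ 2 ^ (t' * m) := by
    have hpos : 0 < 16 * u := by positivity
    apply Nat.le_of_mul_le_mul_left _ hpos
    calc 16 * u * (2 * a * 2 ^ T) = 2 * a * 2 ^ T * (16 * u) := by ring
      _ ≤ 2 * a * 2 ^ T * 2 ^ s := Nat.mul_le_mul_left _ h16u
      _ = 2 * (a * 2 ^ rc) := by rw [← hTs, pow_add]; ring
      _ ≤ 2 * (8 * (t' * m + 1) * 2 ^ (t' * m)) := Nat.mul_le_mul_left _ (by rw [← hu]; exact hcovbound)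
      _ = 16 * u * 2 ^ (t' * m) := by rw [hu]; ring
  -- apply core
  have hcodeG := core GE FE hcode' ha1 hmax hT2
  set R := r' + n * (Nat.log 2 l' + 1) with hR
  have hcodeG' : IC.HasCode GE (fun _ => T) R := by
    rw [hR, hl']
    exact hcodeG
  have hTRpos : (0 : ℝ) < T := by exact_mod_cast hT1
  have hmem : ((R : ℝ) / T) ∈ rset GE := ⟨T, R, hT1, hcodeG', rfl⟩
  have hβGT : βG * T ≤ R := by
    have := beta_le_of_mem GE hmem
    rw [le_div_iff₀ hTRpos] at this
    linarith [this]
  -- real chain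
  have hTcast : (T : ℝ) = (rc : ℝ) - s := by
    rw [hT]
    exact_mod_cast Nat.cast_sub (by omega)
  have hTlow : (t' : ℝ) * βF - s ≤ T := by
    rw [hTcast]
    have : (t' : ℝ) * βF ≤ rc := hcovβ
    linarith
  have hchain1 : βG * ((t' : ℝ) * βF - s) ≤ R :=
    le_trans (mul_le_mul_of_nonneg_left hTlow hβG0) hβGT
  have hscast : (0:ℝ) ≤ (s:ℕ) := Nat.cast_nonneg s
  have hchain2 : βG * βF * ((k : ℝ) * t₀) ≤ (k : ℝ) * r₀ + (n : ℝ) * ((Nat.log 2 l' + 1 + s : ℕ) : ℝ) := by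
    have hRcast : (R : ℝ) = (k : ℝ) * r₀ + n * ((Nat.log 2 l' + 1 : ℕ) : ℝ) := by
      rw [hR, hr']; push_cast; ring
    have ht'cast : (t' : ℝ) = (k : ℝ) * t₀ := by rw [ht']; push_cast; ring
    have hβGs : βG * s ≤ (n : ℝ) * s := mul_le_mul_of_nonneg_right hβGn hscast
    have h1 : βG * ((t' : ℝ) * βF) - βG * s ≤ R := by
      have : βG * ((t' : ℝ) * βF - s) = βG * ((t' : ℝ) * βF) - βG * s := by ring
      linarith [this ▸ hchain1]
    have h2 : βG * βF * ((k : ℝ) * t₀) = βG * ((t' : ℝ) * βF) := by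
      rw [ht'cast]; ring
    rw [h2]
    have h3 : ((Nat.log 2 l' + 1 + s : ℕ) : ℝ) = ((Nat.log 2 l' + 1 : ℕ) : ℝ) + s := by
      push_cast; ring
    rw [h3]
    rw [hRcast] at h1
    linarith
  have hA4R : ((Nat.log 2 l' + 1 + s : ℕ) : ℝ) ≤ (q : ℝ) * C₂ := by exact_mod_cast hA4
  have hkcast : (k : ℝ) = (q : ℝ) * q := by rw [hk]; push_cast; ring
  have hfinal : βG * βF * (t₀ : ℝ) * ((q:ℝ) * q) ≤ ((r₀ : ℝ) + δ) * ((q:ℝ) * q) := by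
    have h1 : βG * βF * (t₀ : ℝ) * ((q:ℝ) * q) ≤ (q:ℝ) * q * r₀ + (n : ℝ) * ((q : ℝ) * C₂) := by
      have hnn : (0:ℝ) ≤ (n:ℝ) := Nat.cast_nonneg n
      have := mul_le_mul_of_nonneg_left hA4R hnn
      calc βG * βF * (t₀ : ℝ) * ((q:ℝ) * q) = βG * βF * ((k : ℝ) * t₀) := by
            rw [hkcast]; ring
        _ ≤ (k : ℝ) * r₀ + (n : ℝ) * ((Nat.log 2 l' + 1 + s : ℕ) : ℝ) := hchain2
        _ ≤ (k : ℝ) * r₀ + (n : ℝ) * ((q : ℝ) * C₂) := by linarith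
        _ = (q:ℝ) * q * r₀ + (n : ℝ) * ((q : ℝ) * C₂) := by rw [hkcast]
    have h2 : (n : ℝ) * ((q : ℝ) * C₂) ≤ δ * ((q:ℝ) * q) := by
      rw [div_lt_iff₀ hδ] at hqR
      have h4 : ((n:ℝ) * (C₂:ℝ)) * (q:ℝ) ≤ ((q:ℝ) * δ) * (q:ℝ) :=
        mul_le_mul_of_nonneg_right (le_of_lt hqR) (Nat.cast_nonneg q)
      have e1 : (n:ℝ) * ((q:ℝ) * C₂) = ((n:ℝ) * (C₂:ℝ)) * (q:ℝ) := by ring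
      have e2 : δ * ((q:ℝ) * q) = ((q:ℝ) * δ) * (q:ℝ) := by ring
      rw [e1, e2]
      exact h4
    have h5 : ((r₀ : ℝ) + δ) * ((q:ℝ) * q) = (q:ℝ) * q * r₀ + δ * ((q:ℝ) * q) := by ring
    linarith [h1, h2]
  have hq2pos : (0:ℝ) < (q:ℝ) * q := by positivity
  exact le_of_mul_le_mul_right hfinal hq2pos

end HardDir

end ICAux

/-- The broadcast rate is multiplicative under the
lexicographic product of directed side information graphs:
`β(G ∘ F) = β(G) · β(F)`. -/
theorem broadcastRate_lexProd
    {V W : Type} [Fintype V] [Fintype W] [Nonempty V] [Nonempty W]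
    (GE : V → V → Prop) (hG : ∀ v, ¬ GE v v)
    (FE : W → W → Prop) (hF : ∀ w, ¬ FE w w) :
    IC.broadcastRate (IC.lexProd GE FE) =
      IC.broadcastRate GE * IC.broadcastRate FE :=
  le_antisymm (ICAux.dir_le GE FE hG hF) (ICAux.dir_ge GE hG FE hF)
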